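/- (Invariability of collinearity under pinhole projection, necessity.) With the same pinhole setup, suppose the projected points u₁, u₂, u₃ are collinear, x₁, x₂, x₃ ∈ ℝ³ are distinct, and there exists a plane containing x₁, x₂, x₃ that does not contain the camera center c = -Rᵀt. Then x₁, x₂, x₃ are collinear in world coordinates. -/
import Mathlib


/-- Invariability of collinearity under pinhole projection (necessity):
if the projected points are collinear, the world points are distinct, and some
plane contains the three world points but not the camera center `-Rᵀt`, then
the world points are collinear. -/
theorem pinhole_collinear_necessity
    (R K : Matrix (Fin 3) (Fin 3) ℝ) (t : Fin 3 → ℝ)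
    (hR : R.transpose * R = 1) (hRdet : R.det = 1)
    (hK : IsUnit K.det)
    (hK20 : K 2 0 = 0) (hK21 : K 2 1 = 0) (hK22 : K 2 2 = 1)
    (x₁ x₂ x₃ : Fin 3 → ℝ) (u₁ u₂ u₃ : Fin 2 → ℝ) (s₁ s₂ s₃ : ℝ)
    (hs₁ : s₁ ≠ 0) (hs₂ : s₂ ≠ 0) (hs₃ : s₃ ≠ 0)
    (hp₁ : s₁ • ![u₁ 0, u₁ 1, 1] = K.mulVec (R.mulVec x₁ + t))
    (hp₂ : s₂ • ![u₂ 0, u₂ 1, 1] = K.mulVec (R.mulVec x₂ + t))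
    (hp₃ : s₃ • ![u₃ 0, u₃ 1, 1] = K.mulVec (R.mulVec x₃ + t))
    (hucol : Collinear ℝ ({u₁, u₂, u₃} : Set (Fin 2 → ℝ)))
    (hne₁₂ : x₁ ≠ x₂) (hne₁₃ : x₁ ≠ x₃) (hne₂₃ : x₂ ≠ x₃)
    (hplane : ∃ Q : AffineSubspace ℝ (Fin 3 → ℝ),
      Module.finrank ℝ Q.direction = 2 ∧
      x₁ ∈ Q ∧ x₂ ∈ Q ∧ x₃ ∈ Q ∧ -(R.transpose.mulVec t) ∉ Q) :
    Collinear ℝ ({x₁, x₂, x₃} : Set (Fin 3 → ℝ)) := by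
  classical
  by_contra hcol
  obtain ⟨Q, hQdim, hx1Q, hx2Q, hx3Q, hcQ⟩ := hplane
  set c : Fin 3 → ℝ := -(R.transpose.mulVec t) with hc
  obtain ⟨p₀, d, hud⟩ := ((collinear_iff_exists_forall_eq_smul_vadd _).1 hucol)
  obtain ⟨r₁, hr₁⟩ := hud u₁ (by simp)
  obtain ⟨r₂, hr₂⟩ := hud u₂ (by simp)
  obtain ⟨r₃, hr₃⟩ := hud u₃ (by simp)
  set M : Matrix (Fin 3) (Fin 3) ℝ := R.transpose * K⁻¹ with hM
  set v₀ : Fin 3 → ℝ := ![p₀ 0, p₀ 1, 1] with hv₀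
  set w : Fin 3 → ℝ := ![d 0, d 1, 0] with hw
  set V : Submodule ℝ (Fin 3 → ℝ) :=
    Submodule.span ℝ {M.mulVec v₀, M.mulVec w} with hV
  have key : ∀ (x : Fin 3 → ℝ) (u : Fin 2 → ℝ) (s r : ℝ),
      s • ![u 0, u 1, 1] = K.mulVec (R.mulVec x + t) → u = r • d +ᵥ p₀ →
      x - c ∈ V := by
    intro x u s r hp hu
    have hv : (![u 0, u 1, 1] : Fin 3 → ℝ) = v₀ + r • w := by
      funext i
      fin_cases i <;>
        simp [hv₀, hw, hu, vadd_eq_add] <;> ring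
    have h2 : R.mulVec x + t = s • (K⁻¹).mulVec (v₀ + r • w) := by
      rw [← hv, ← Matrix.mulVec_smul, hp, Matrix.mulVec_mulVec,
        Matrix.nonsing_inv_mul K hK, Matrix.one_mulVec]
    have hx : x - c = s • (M.mulVec v₀ + r • M.mulVec w) := by
      have h3 : x - c = R.transpose.mulVec (R.mulVec x + t) := by
        rw [Matrix.mulVec_add, Matrix.mulVec_mulVec, hR, Matrix.one_mulVec, hc]
        abel
      rw [h3, h2]
      simp [Matrix.mulVec_add, Matrix.mulVec_smul, Matrix.mulVec_mulVec, hM]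
    rw [hx]
    refine Submodule.smul_mem _ _ (Submodule.add_mem _ ?_ (Submodule.smul_mem _ _ ?_))
    · exact Submodule.subset_span (by simp)
    · exact Submodule.subset_span (by simp)
  have hd1 := key x₁ u₁ s₁ r₁ hp₁ hr₁
  have hd2 := key x₂ u₂ s₂ r₂ hp₂ hr₂
  have hd3 := key x₃ u₃ s₃ r₃ hp₃ hr₃
  set T : Submodule ℝ (Fin 3 → ℝ) :=
    vectorSpan ℝ ({x₁, x₂, x₃} : Set (Fin 3 → ℝ)) with hT
  have hmemV : ∀ p ∈ ({x₁, x₂, x₃} : Set (Fin 3 → ℝ)), p - c ∈ V := by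
    rintro p (rfl | rfl | rfl) <;> assumption
  have hTV : T ≤ V := by
    rw [hT, vectorSpan_def, Submodule.span_le]
    rintro z ⟨a, ha, b, hb, rfl⟩
    have := Submodule.sub_mem V (hmemV a ha) (hmemV b hb)
    simpa [vsub_eq_sub, sub_sub_sub_cancel_right] using this
  have hTQ : T ≤ Q.direction := by
    rw [hT, ← direction_affineSpan]
    exact AffineSubspace.direction_le (affineSpan_le.2 (by
      rintro p (rfl | rfl | rfl) <;> assumption))
  have h2T : 2 ≤ Module.finrank ℝ T := by
    by_contra h
    refine hcol (collinear_iff_finrank_le_one.2 ?_)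
    show Module.finrank ℝ T ≤ 1
    omega
  have hVle : Module.finrank ℝ V ≤ 2 := by
    refine le_trans (finrank_span_le_card _) ?_
    rw [Set.toFinset_insert, Set.toFinset_singleton]
    simpa using Finset.card_insert_le (M.mulVec v₀) {M.mulVec w}
  have hTVeq : T = V := Submodule.eq_of_le_of_finrank_le hTV (hVle.trans h2T)
  have hTQeq : T = Q.direction :=
    Submodule.eq_of_le_of_finrank_le hTQ (hQdim.le.trans h2T)
  have hx1c : x₁ - c ∈ Q.direction := by
    rw [← hTQeq, hTVeq]; exact hd1
  have hcmem : c ∈ Q := by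
    have h := AffineSubspace.vadd_mem_of_mem_direction
      (Submodule.neg_mem _ hx1c) hx1Q
    simpa [vadd_eq_add, neg_sub, sub_add_cancel] using h
  exact hcQ hcmem
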